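/- Let Ω be a non-empty, connected, bounded domain in a connected locally finite graph G=(V,E) satisfying the standing assumptions, and let p > 2. Then the Dirichlet problem Δ²u − Δu + u = |u|^{p−2}u in Ω, u = 0 on ∂Ω, has a ground state solution u₀ ∈ H(Ω), i.e. u₀ ∈ N_Ω is a critical point of J_Ω with J_Ω(u₀) = m_Ω = inf_{N_Ω} J_Ω. -/

import Mathlib

open Filter Topology

structure GraphData (V : Type*) where
  ω : V → V → ℝ
  μ : V → ℝ
  sym : ∀ x y, ω x y = ω y x
  nonneg : ∀ x y, 0 ≤ ω x y
  loopless : ∀ x, ω x x = 0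
  locfin : ∀ x, {y | ω x y ≠ 0}.Finite
  μpos : ∀ x, 0 < μ x

variable {V : Type*}

noncomputable def GraphData.lap (g : GraphData V) (u : V → ℝ) (x : V) : ℝ :=
  (1 / g.μ x) * ∑' y, g.ω x y * (u y - u x)

noncomputable def GraphData.grad (g : GraphData V) (u v : V → ℝ) (x : V) : ℝ :=
  (1 / (2 * g.μ x)) * ∑' y, g.ω x y * (u y - u x) * (v y - v x)

noncomputable def GraphData.integral (g : GraphData V) (f : V → ℝ) : ℝ :=
  ∑' x, g.μ x * f x

def GraphData.G (g : GraphData V) : SimpleGraph V where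
  Adj x y := 0 < g.ω x y
  symm := ⟨fun x y h => by show 0 < g.ω y x; rw [g.sym y x]; exact h⟩
  loopless := ⟨fun x h => by simp [g.loopless x] at h⟩

noncomputable def GraphData.enormSq (g : GraphData V) (a : V → ℝ) (lam : ℝ) (u : V → ℝ) : ℝ :=
  ∑' x, g.μ x * ((g.lap u x) ^ 2 + g.grad u u x + (lam * a x + 1) * (u x) ^ 2)

def GraphData.memE (g : GraphData V) (a : V → ℝ) (lam : ℝ) (u : V → ℝ) : Prop :=
  Summable fun x => g.μ x * ((g.lap u x) ^ 2 + g.grad u u x + (lam * a x + 1) * (u x) ^ 2)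

noncomputable def GraphData.lpInt (g : GraphData V) (p : ℝ) (u : V → ℝ) : ℝ :=
  ∑' x, g.μ x * |u x| ^ p

noncomputable def GraphData.Jlam (g : GraphData V) (a : V → ℝ) (lam p : ℝ) (u : V → ℝ) : ℝ :=
  (1 / 2) * g.enormSq a lam u - (1 / p) * g.lpInt p u

def GraphData.Nehari (g : GraphData V) (a : V → ℝ) (lam p : ℝ) : Set (V → ℝ) :=
  {u | u ≠ 0 ∧ g.memE a lam u ∧ g.enormSq a lam u = g.lpInt p u}

noncomputable def GraphData.Jderiv (g : GraphData V) (a : V → ℝ) (lam p : ℝ) (u φ : V → ℝ) : ℝ :=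
  (∑' x, g.μ x * (g.lap u x * g.lap φ x + g.grad u φ x + (lam * a x + 1) * u x * φ x))
    - ∑' x, g.μ x * (|u x| ^ (p - 2) * u x * φ x)

def GraphData.bdry (g : GraphData V) (Ω : Set V) : Set V :=
  {y | y ∉ Ω ∧ ∃ x ∈ Ω, 0 < g.ω x y}

noncomputable def GraphData.hnormSq (g : GraphData V) (Ω : Set V) (u : V → ℝ) : ℝ :=
  (∑' x : ↥(Ω ∪ g.bdry Ω), g.μ x * ((g.lap u x) ^ 2 + g.grad u u x))
    + ∑' x : Ω, g.μ x * (u x) ^ 2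

noncomputable def GraphData.lpIntO (g : GraphData V) (Ω : Set V) (p : ℝ) (u : V → ℝ) : ℝ :=
  ∑' x : Ω, g.μ x * |u x| ^ p

noncomputable def GraphData.JOmega (g : GraphData V) (Ω : Set V) (p : ℝ) (u : V → ℝ) : ℝ :=
  (1 / 2) * g.hnormSq Ω u - (1 / p) * g.lpIntO Ω p u

def GraphData.memH (g : GraphData V) (Ω : Set V) (u : V → ℝ) : Prop :=
  ∀ x ∉ Ω, u x = 0

def GraphData.NehariO (g : GraphData V) (Ω : Set V) (p : ℝ) : Set (V → ℝ) :=
  {u | u ≠ 0 ∧ g.memH Ω u ∧ g.hnormSq Ω u = g.lpIntO Ω p u}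

noncomputable def GraphData.JderivO (g : GraphData V) (Ω : Set V) (p : ℝ) (u φ : V → ℝ) : ℝ :=
  (∑' x : ↥(Ω ∪ g.bdry Ω), g.μ x * (g.lap u x * g.lap φ x + g.grad u φ x))
    + (∑' x : Ω, g.μ x * (u x * φ x))
    - ∑' x : Ω, g.μ x * (|u x| ^ (p - 2) * u x * φ x)

namespace Stmt14Aux

noncomputable def nbr (g : GraphData V) (x : V) : Finset V := (g.locfin x).toFinset

lemma lap_eq_sum (g : GraphData V) (u : V → ℝ) (x : V) :
    g.lap u x = (1 / g.μ x) * ∑ y ∈ nbr g x, g.ω x y * (u y - u x) := by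
  unfold GraphData.lap
  congr 1
  refine tsum_eq_sum (fun y hy => ?_)
  have : g.ω x y = 0 := by
    by_contra h; exact hy (by simpa [nbr] using h)
  simp [this]

lemma grad_eq_sum (g : GraphData V) (u v : V → ℝ) (x : V) :
    g.grad u v x = (1 / (2 * g.μ x)) * ∑ y ∈ nbr g x, g.ω x y * (u y - u x) * (v y - v x) := by
  unfold GraphData.grad
  congr 1
  refine tsum_eq_sum (fun y hy => ?_)
  have : g.ω x y = 0 := by
    by_contra h; exact hy (by simpa [nbr] using h)
  simp [this]

lemma lap_line (g : GraphData V) (u φ : V → ℝ) (s : ℝ) (x : V) :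
    g.lap (fun z => u z + s * φ z) x = g.lap u x + s * g.lap φ x := by
  simp only [lap_eq_sum]
  rw [Finset.sum_congr rfl (fun y _ => by ring :
    ∀ y ∈ nbr g x, g.ω x y * ((u y + s * φ y) - (u x + s * φ x))
      = g.ω x y * (u y - u x) + s * (g.ω x y * (φ y - φ x))),
    Finset.sum_add_distrib, ← Finset.mul_sum]
  ring

lemma grad_line (g : GraphData V) (u φ v : V → ℝ) (s : ℝ) (x : V) :
    g.grad (fun z => u z + s * φ z) v x = g.grad u v x + s * g.grad φ v x := by
  simp only [grad_eq_sum]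
  rw [Finset.sum_congr rfl (fun y _ => by ring :
    ∀ y ∈ nbr g x, g.ω x y * ((u y + s * φ y) - (u x + s * φ x)) * (v y - v x)
      = g.ω x y * (u y - u x) * (v y - v x) + s * (g.ω x y * (φ y - φ x) * (v y - v x))),
    Finset.sum_add_distrib, ← Finset.mul_sum]
  ring

lemma grad_symm (g : GraphData V) (u v : V → ℝ) (x : V) :
    g.grad u v x = g.grad v u x := by
  simp only [grad_eq_sum]
  congr 1
  exact Finset.sum_congr rfl fun y _ => by ring

lemma grad_self_nonneg (g : GraphData V) (u : V → ℝ) (x : V) :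
    0 ≤ g.grad u u x := by
  rw [grad_eq_sum]
  have hμ := g.μpos x
  have h1 : (0:ℝ) ≤ 1 / (2 * g.μ x) := by positivity
  refine mul_nonneg h1 (Finset.sum_nonneg fun y _ => ?_)
  rw [mul_assoc]
  exact mul_nonneg (g.nonneg x y) (mul_self_nonneg _)

lemma lap_smul (g : GraphData V) (c : ℝ) (u : V → ℝ) (x : V) :
    g.lap (fun z => c * u z) x = c * g.lap u x := by
  simp only [lap_eq_sum]
  rw [Finset.sum_congr rfl (fun y _ => by ring :
    ∀ y ∈ nbr g x, g.ω x y * (c * u y - c * u x) = c * (g.ω x y * (u y - u x))),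
    ← Finset.mul_sum]
  ring

lemma grad_smul (g : GraphData V) (c : ℝ) (u v : V → ℝ) (x : V) :
    g.grad (fun z => c * u z) v x = c * g.grad u v x := by
  simp only [grad_eq_sum]
  rw [Finset.sum_congr rfl (fun y _ => by ring :
    ∀ y ∈ nbr g x, g.ω x y * (c * u y - c * u x) * (v y - v x)
      = c * (g.ω x y * (u y - u x) * (v y - v x))),
    ← Finset.mul_sum]
  ring

lemma adj_mem_locfin (g : GraphData V) {z y : V} (h : g.G.Adj z y) : y ∈ {w | g.ω z w ≠ 0} :=
  ne_of_gt h

lemma ball_finite (g : GraphData V) (hconn : g.G.Connected) (x : V) :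
    ∀ n : ℕ, {y | g.G.dist x y ≤ n}.Finite := by
  intro n
  induction n with
  | zero =>
    refine Set.Finite.subset (Set.finite_singleton x) (fun y hy => ?_)
    have : g.G.dist x y = 0 := Nat.le_zero.mp hy
    simp [((hconn.dist_eq_zero_iff).mp this).symm]
  | succ n ih =>
    have hsub : {y | g.G.dist x y ≤ n + 1} ⊆
        {y | g.G.dist x y ≤ n} ∪ ⋃ z ∈ {y | g.G.dist x y ≤ n}, {w | g.ω z w ≠ 0} := by
      intro y hy
      rcases Nat.lt_or_ge (g.G.dist x y) (n+1) with h | h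
      · exact Or.inl (Nat.lt_succ_iff.mp h)
      · have hd : g.G.dist x y = n + 1 := le_antisymm hy h
        obtain ⟨p, hp⟩ := hconn.exists_walk_length_eq_dist x y
        have hp' : p.length = n + 1 := by rw [hp, hd]
        -- look at the reverse walk from y to x
        right
        rcases hq : p.reverse with _ | ⟨hadj, q⟩
        · exfalso
          have := hq ▸ (p.length_reverse)
          simp [hp'] at this
        · -- hadj : g.G.Adj y z, q : Walk z x
          rename_i z
          have hlq : q.length = n := by
            have := hq ▸ (p.length_reverse)
            simpa [hp', SimpleGraph.Walk.length_cons] using this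
          have hz : g.G.dist x z ≤ n := by
            have := SimpleGraph.dist_le q.reverse
            simpa [hlq] using this
          refine Set.mem_biUnion hz ?_
          exact adj_mem_locfin g hadj.symm
    exact Set.Finite.subset (ih.union (Set.Finite.biUnion ih (fun z _ => g.locfin z))) hsub

lemma tsum_set {V : Type*} (s : Set V) (hs : s.Finite) (f : V → ℝ) :
    ∑' x : s, f ↑x = ∑ x ∈ hs.toFinset, f x := by
  rw [tsum_subtype]
  rw [tsum_eq_sum (s := hs.toFinset)
    (fun x hx => Set.indicator_of_notMem (by simpa using hx) f)]
  exact Finset.sum_congr rfl fun x hx => Set.indicator_of_mem (by simpa using hx) f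

lemma abs_rpow_eq (p t : ℝ) : |t| ^ p = (t ^ 2) ^ (p / 2) := by
  rw [← sq_abs, ← Real.rpow_natCast |t| 2, ← Real.rpow_mul (abs_nonneg t)]
  norm_num
  congr 1
  ring

lemma hasDerivAt_abs_rpow {p : ℝ} (hp : 2 < p) (t : ℝ) :
    HasDerivAt (fun t : ℝ => |t| ^ p) (p * |t| ^ (p - 2) * t) t := by
  have h1 : HasDerivAt (fun t : ℝ => t ^ 2) (2 * t) t := by simpa using hasDerivAt_pow 2 t
  have h3 : HasDerivAt (fun t : ℝ => (t ^ 2) ^ (p / 2)) (2 * t * (p / 2) * (t ^ 2) ^ (p / 2 - 1)) t :=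
    h1.rpow_const (Or.inr (by linarith))
  have he : (fun t : ℝ => |t| ^ p) = fun t : ℝ => (t ^ 2) ^ (p / 2) :=
    funext fun t => abs_rpow_eq p t
  rw [he]
  convert h3 using 1
  have h4 : (t ^ 2) ^ (p / 2 - 1) = |t| ^ (p - 2) := by
    rw [abs_rpow_eq (p - 2) t]
    congr 1; ring
  rw [h4]; ring

variable (g : GraphData V) (Ω : Set V)

/-- finite-sum version of `hnormSq`. -/
noncomputable def QS (hS : (Ω ∪ g.bdry Ω).Finite) (hO : Ω.Finite) (u : V → ℝ) : ℝ :=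
  (∑ x ∈ hS.toFinset, g.μ x * ((g.lap u x) ^ 2 + g.grad u u x))
    + ∑ x ∈ hO.toFinset, g.μ x * (u x) ^ 2

noncomputable def PS (hO : Ω.Finite) (p : ℝ) (u : V → ℝ) : ℝ :=
  ∑ x ∈ hO.toFinset, g.μ x * |u x| ^ p

noncomputable def BS (hS : (Ω ∪ g.bdry Ω).Finite) (hO : Ω.Finite) (u φ : V → ℝ) : ℝ :=
  (∑ x ∈ hS.toFinset, g.μ x * (g.lap u x * g.lap φ x + g.grad u φ x))
    + ∑ x ∈ hO.toFinset, g.μ x * (u x * φ x)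

noncomputable def NS (hO : Ω.Finite) (p : ℝ) (u φ : V → ℝ) : ℝ :=
  ∑ x ∈ hO.toFinset, g.μ x * (|u x| ^ (p - 2) * u x * φ x)

variable {g Ω}
variable {hS : (Ω ∪ g.bdry Ω).Finite} {hO : Ω.Finite} {p : ℝ}

lemma hnormSq_eq : g.hnormSq Ω u = QS g Ω hS hO u := by
  unfold GraphData.hnormSq QS
  rw [tsum_set (Ω ∪ g.bdry Ω) hS (fun x => g.μ x * ((g.lap u x) ^ 2 + g.grad u u x)),
    tsum_set Ω hO (fun x => g.μ x * (u x) ^ 2)]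

lemma lpIntO_eq (u : V → ℝ) : g.lpIntO Ω p u = PS g Ω hO p u := by
  unfold GraphData.lpIntO PS
  rw [tsum_set Ω hO (fun x => g.μ x * |u x| ^ p)]

lemma JOmega_eq (u : V → ℝ) :
    g.JOmega Ω p u = (1 / 2) * QS g Ω hS hO u - (1 / p) * PS g Ω hO p u := by
  unfold GraphData.JOmega
  rw [hnormSq_eq (hS := hS) (hO := hO), lpIntO_eq (hO := hO)]

lemma JderivO_eq (u φ : V → ℝ) :
    g.JderivO Ω p u φ = BS g Ω hS hO u φ - NS g Ω hO p u φ := by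
  unfold GraphData.JderivO BS NS
  rw [tsum_set (Ω ∪ g.bdry Ω) hS (fun x => g.μ x * (g.lap u x * g.lap φ x + g.grad u φ x)),
    tsum_set Ω hO (fun x => g.μ x * (u x * φ x)),
    tsum_set Ω hO (fun x => g.μ x * (|u x| ^ (p - 2) * u x * φ x))]

lemma QS_line (u φ : V → ℝ) (s : ℝ) :
    QS g Ω hS hO (fun z => u z + s * φ z)
      = QS g Ω hS hO u + 2 * s * BS g Ω hS hO u φ + s ^ 2 * QS g Ω hS hO φ := by
  unfold QS BS
  have h1 : ∀ x ∈ hS.toFinset,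
      g.μ x * ((g.lap (fun z => u z + s * φ z) x) ^ 2
          + g.grad (fun z => u z + s * φ z) (fun z => u z + s * φ z) x)
        = g.μ x * ((g.lap u x) ^ 2 + g.grad u u x)
          + 2 * s * (g.μ x * (g.lap u x * g.lap φ x + g.grad u φ x))
          + s ^ 2 * (g.μ x * ((g.lap φ x) ^ 2 + g.grad φ φ x)) := by
    intro x _
    rw [lap_line, grad_line, grad_symm g u _, grad_symm g φ _, grad_line, grad_line,
      grad_symm g u φ]
    ring
  have h2 : ∀ x ∈ hO.toFinset,
      g.μ x * (u x + s * φ x) ^ 2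
        = g.μ x * (u x) ^ 2 + 2 * s * (g.μ x * (u x * φ x)) + s ^ 2 * (g.μ x * (φ x) ^ 2) := by
    intro x _; ring
  rw [Finset.sum_congr rfl h1, Finset.sum_congr rfl h2, Finset.sum_add_distrib,
    Finset.sum_add_distrib, Finset.sum_add_distrib, Finset.sum_add_distrib,
    ← Finset.mul_sum, ← Finset.mul_sum, ← Finset.mul_sum, ← Finset.mul_sum]
  ring

lemma QS_smul (c : ℝ) (u : V → ℝ) :
    QS g Ω hS hO (fun z => c * u z) = c ^ 2 * QS g Ω hS hO u := by
  unfold QS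
  have h1 : ∀ x ∈ hS.toFinset,
      g.μ x * ((g.lap (fun z => c * u z) x) ^ 2
          + g.grad (fun z => c * u z) (fun z => c * u z) x)
        = c ^ 2 * (g.μ x * ((g.lap u x) ^ 2 + g.grad u u x)) := by
    intro x _
    rw [lap_smul, grad_smul, grad_symm g u _, grad_smul, grad_symm g u u]
    ring
  have h2 : ∀ x ∈ hO.toFinset,
      g.μ x * (c * u x) ^ 2 = c ^ 2 * (g.μ x * (u x) ^ 2) := by intro x _; ring
  rw [Finset.sum_congr rfl h1, Finset.sum_congr rfl h2, ← Finset.mul_sum, ← Finset.mul_sum]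
  ring

lemma BS_smul (c : ℝ) (u φ : V → ℝ) :
    BS g Ω hS hO (fun z => c * u z) φ = c * BS g Ω hS hO u φ := by
  unfold BS
  have h1 : ∀ x ∈ hS.toFinset,
      g.μ x * (g.lap (fun z => c * u z) x * g.lap φ x + g.grad (fun z => c * u z) φ x)
        = c * (g.μ x * (g.lap u x * g.lap φ x + g.grad u φ x)) := by
    intro x _; rw [lap_smul, grad_smul]; ring
  have h2 : ∀ x ∈ hO.toFinset,
      g.μ x * (c * u x * φ x) = c * (g.μ x * (u x * φ x)) := by intro x _; ring
  rw [Finset.sum_congr rfl h1, Finset.sum_congr rfl h2, ← Finset.mul_sum, ← Finset.mul_sum]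
  ring

lemma PS_smul (hp : 2 < p) {c : ℝ} (hc : 0 < c) (u : V → ℝ) :
    PS g Ω hO p (fun z => c * u z) = c ^ p * PS g Ω hO p u := by
  unfold PS
  have h1 : ∀ x ∈ hO.toFinset,
      g.μ x * |c * u x| ^ p = c ^ p * (g.μ x * |u x| ^ p) := by
    intro x _
    rw [abs_mul, abs_of_pos hc, Real.mul_rpow hc.le (abs_nonneg _)]
    ring
  rw [Finset.sum_congr rfl h1, ← Finset.mul_sum]

lemma NS_smul (hp : 2 < p) {t : ℝ} (ht : 0 < t) (u φ : V → ℝ) :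
    NS g Ω hO p (fun z => t * u z) φ = t ^ (p - 1) * NS g Ω hO p u φ := by
  unfold NS
  have h1 : ∀ x ∈ hO.toFinset,
      g.μ x * (|t * u x| ^ (p - 2) * (t * u x) * φ x)
        = t ^ (p - 1) * (g.μ x * (|u x| ^ (p - 2) * u x * φ x)) := by
    intro x _
    rw [abs_mul, abs_of_pos ht, Real.mul_rpow ht.le (abs_nonneg _)]
    have h2 : t ^ (p - 1) = t ^ (p - 2) * t := by
      rw [show p - 1 = (p - 2) + 1 by ring, Real.rpow_add ht, Real.rpow_one]
    rw [h2]; ring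
  rw [Finset.sum_congr rfl h1, ← Finset.mul_sum]

lemma QS_first_nonneg (u : V → ℝ) :
    (0:ℝ) ≤ ∑ x ∈ hS.toFinset, g.μ x * ((g.lap u x) ^ 2 + g.grad u u x) :=
  Finset.sum_nonneg fun x _ => mul_nonneg (g.μpos x).le
    (add_nonneg (sq_nonneg _) (grad_self_nonneg g u x))

lemma QS_ge_term (u : V → ℝ) {x : V} (hx : x ∈ hO.toFinset) :
    g.μ x * (u x) ^ 2 ≤ QS g Ω hS hO u := by
  unfold QS
  have h1 : g.μ x * (u x) ^ 2 ≤ ∑ y ∈ hO.toFinset, g.μ y * (u y) ^ 2 :=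
    Finset.single_le_sum (f := fun x => g.μ x * (u x) ^ 2)
      (fun x _ => mul_nonneg (g.μpos x).le (sq_nonneg _)) hx
  have h2 := QS_first_nonneg (hS := hS) (g := g) (Ω := Ω) u
  linarith

lemma QS_pos (u : V → ℝ) (hu : g.memH Ω u) (hune : u ≠ 0) : 0 < QS g Ω hS hO u := by
  obtain ⟨x, hx⟩ : ∃ x, u x ≠ 0 := by
    by_contra h; push_neg at h; exact hune (funext h)
  have hxΩ : x ∈ Ω := by by_contra h; exact hx (hu x h)
  have hterm : 0 < g.μ x * (u x) ^ 2 :=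
    mul_pos (g.μpos x) (by positivity)
  exact lt_of_lt_of_le hterm (QS_ge_term u (by simpa using hxΩ))

lemma PS_pos (hp : 2 < p) (u : V → ℝ) (hu : g.memH Ω u) (hune : u ≠ 0) :
    0 < PS g Ω hO p u := by
  obtain ⟨x, hx⟩ : ∃ x, u x ≠ 0 := by
    by_contra h; push_neg at h; exact hune (funext h)
  have hxΩ : x ∈ Ω := by by_contra h; exact hx (hu x h)
  unfold PS
  refine Finset.sum_pos' (fun y _ => mul_nonneg (g.μpos y).le (Real.rpow_nonneg (abs_nonneg _) _))
    ⟨x, by simpa using hxΩ, mul_pos (g.μpos x) (Real.rpow_pos_of_pos (abs_pos.2 hx) p)⟩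

lemma QS_zero : QS g Ω hS hO (fun _ => (0:ℝ)) = 0 := by
  unfold QS
  have h1 : ∀ x, g.lap (fun _ => (0:ℝ)) x = 0 := by
    intro x; rw [lap_eq_sum]; simp
  have h2 : ∀ x, g.grad (fun _ => (0:ℝ)) (fun _ => (0:ℝ)) x = 0 := by
    intro x; rw [grad_eq_sum]; simp
  simp [h1, h2]

lemma memH_line {u φ : V → ℝ} (hu : g.memH Ω u) (hφ : g.memH Ω φ) (s : ℝ) :
    g.memH Ω (fun z => u z + s * φ z) := by
  intro x hx; show u x + s * φ x = 0; rw [hu x hx, hφ x hx]; ring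

lemma memH_smul {u : V → ℝ} (hu : g.memH Ω u) (c : ℝ) :
    g.memH Ω (fun z => c * u z) := by
  intro x hx; show c * u x = 0; rw [hu x hx]; ring

open scoped Classical

variable (hO)

noncomputable def extE (v : ↥hO.toFinset → ℝ) : V → ℝ :=
  fun x => if h : x ∈ hO.toFinset then v ⟨x, h⟩ else 0

variable {hO}

lemma extE_memH (v : ↥hO.toFinset → ℝ) : g.memH Ω (extE hO v) := by
  intro x hx
  have : x ∉ hO.toFinset := by simpa using hx
  simp [extE, this]

lemma extE_of_memH {u : V → ℝ} (hu : g.memH Ω u) :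
    extE hO (fun i => u ↑i) = u := by
  funext x
  by_cases h : x ∈ hO.toFinset
  · simp [extE, h]
  · simp [extE, h, hu x (by simpa using h)]

lemma extE_coord_continuous (x : V) :
    Continuous fun v : ↥hO.toFinset → ℝ => extE hO v x := by
  unfold extE
  by_cases h : x ∈ hO.toFinset
  · simp only [h, dif_pos]; exact continuous_apply _
  · simp only [h, dif_neg, not_false_iff]; exact continuous_const

lemma lap_extE_continuous (x : V) :
    Continuous fun v : ↥hO.toFinset → ℝ => g.lap (extE hO v) x := by
  simp only [lap_eq_sum]
  exact continuous_const.mul (continuous_finset_sum _ fun y _ =>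
    continuous_const.mul ((extE_coord_continuous y).sub (extE_coord_continuous x)))

lemma grad_extE_continuous (x : V) :
    Continuous fun v : ↥hO.toFinset → ℝ => g.grad (extE hO v) (extE hO v) x := by
  simp only [grad_eq_sum]
  exact continuous_const.mul (continuous_finset_sum _ fun y _ =>
    (continuous_const.mul ((extE_coord_continuous y).sub (extE_coord_continuous x))).mul
      ((extE_coord_continuous y).sub (extE_coord_continuous x)))

lemma QS_extE_continuous :
    Continuous fun v : ↥hO.toFinset → ℝ => QS g Ω hS hO (extE hO v) := by
  unfold QS
  exact (continuous_finset_sum _ fun x _ => continuous_const.mul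
      (((lap_extE_continuous x).pow 2).add (grad_extE_continuous x))).add
    (continuous_finset_sum _ fun x _ => continuous_const.mul
      ((extE_coord_continuous x).pow 2))

lemma PS_extE_continuous (hp : 2 < p) :
    Continuous fun v : ↥hO.toFinset → ℝ => PS g Ω hO p (extE hO v) := by
  unfold PS
  exact continuous_finset_sum _ fun x _ => continuous_const.mul
    (((extE_coord_continuous x).abs).rpow_const fun v => Or.inr (by linarith))

end Stmt14Aux

open Stmt14Aux in
/-- the Dirichlet problem on the bounded domain Ω has a ground state solution. -/
theorem stmt14 (g : GraphData V) (μmin C p : ℝ) (hμmin : 0 < μmin)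
    (hμ : ∀ x, μmin ≤ g.μ x) (hω : ∀ x, ∑' y, g.ω x y ≤ C) (hconn : g.G.Connected)
    (Ω : Set V) (hne : Ω.Nonempty)
    (hbd : ∃ D : ℕ, ∀ x ∈ Ω, ∀ y ∈ Ω, g.G.dist x y ≤ D)
    (hconnΩ : (g.G.induce Ω).Connected)
    (hp : 2 < p) :
    ∃ u₀ ∈ g.NehariO Ω p,
      (∀ v ∈ g.NehariO Ω p, g.JOmega Ω p u₀ ≤ g.JOmega Ω p v)
      ∧ ∀ φ, g.memH Ω φ → g.JderivO Ω p u₀ φ = 0 := by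
  classical
  obtain ⟨x₀, hx₀⟩ := hne
  obtain ⟨D, hD⟩ := hbd
  -- Ω and its boundary are finite
  have hO : Ω.Finite :=
    Set.Finite.subset (ball_finite g hconn x₀ D) (fun y hy => hD x₀ hx₀ y hy)
  have hbf : (g.bdry Ω).Finite := by
    refine Set.Finite.subset (Set.Finite.biUnion hO fun x _ => g.locfin x) ?_
    rintro y ⟨-, x, hxΩ, hxy⟩
    exact Set.mem_biUnion hxΩ (ne_of_gt hxy)
  have hS : (Ω ∪ g.bdry Ω).Finite := hO.union hbf
  have hp0 : (0 : ℝ) < p := by linarith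
  have hp2 : p - 2 ≠ 0 := by linarith
  -- normalization
  have hnorm : ∀ u : V → ℝ, g.memH Ω u → u ≠ 0 →
      QS g Ω hS hO (fun z => ((QS g Ω hS hO u) ^ (-(1/2) : ℝ)) * u z) = 1 := by
    intro u hu hune
    have ha : 0 < QS g Ω hS hO u := QS_pos u hu hune
    rw [QS_smul]
    have hc2 : ((QS g Ω hS hO u) ^ (-(1/2) : ℝ)) ^ 2 = (QS g Ω hS hO u)⁻¹ := by
      rw [← Real.rpow_natCast ((QS g Ω hS hO u) ^ (-(1/2) : ℝ)) 2,
        ← Real.rpow_mul ha.le]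
      norm_num
      exact Real.rpow_neg_one _
    rw [hc2, inv_mul_cancel₀ ha.ne']
  -- the constraint set in the finite-dimensional space
  set K : Set (↥hO.toFinset → ℝ) := {v | QS g Ω hS hO (extE hO v) = 1} with hKdef
  have hKne : K.Nonempty := by
    set w₀ : V → ℝ := fun z => if z = x₀ then (1:ℝ) else 0 with hw₀
    have hw₀H : g.memH Ω w₀ := by
      intro x hx
      have : x ≠ x₀ := fun h => hx (h ▸ hx₀)
      simp [hw₀, this]
    have hw₀ne : w₀ ≠ 0 := by
      intro h
      have := congrFun h x₀
      simp [hw₀] at this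
    set c : ℝ := (QS g Ω hS hO w₀) ^ (-(1/2) : ℝ) with hc
    have hcH : g.memH Ω (fun z => c * w₀ z) := memH_smul hw₀H c
    refine ⟨fun i => c * w₀ ↑i, ?_⟩
    show QS g Ω hS hO (extE hO (fun i => c * w₀ ↑i)) = 1
    rw [extE_of_memH hcH]
    exact hnorm w₀ hw₀H hw₀ne
  have hKclosed : IsClosed K :=
    isClosed_singleton.preimage QS_extE_continuous
  have hKcompact : IsCompact K := by
    have hRnn : (0:ℝ) ≤ Real.sqrt (1/μmin) := Real.sqrt_nonneg _
    refine (isCompact_closedBall (0 : ↥hO.toFinset → ℝ) (Real.sqrt (1/μmin))).of_isClosed_subset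
      hKclosed ?_
    intro v hv
    rw [Metric.mem_closedBall, dist_zero_right]
    rw [pi_norm_le_iff_of_nonneg hRnn]
    intro i
    have hext : extE hO v ↑i = v i := by simp [extE, i.2]
    have h1 : g.μ ↑i * (extE hO v ↑i) ^ 2 ≤ 1 := by
      have := QS_ge_term (hS := hS) (g := g) (Ω := Ω) (extE hO v) i.2
      have hv1 : QS g Ω hS hO (extE hO v) = 1 := hv
      linarith [hv1 ▸ this]
    rw [hext] at h1
    have h2 : μmin * (v i) ^ 2 ≤ 1 :=
      le_trans (mul_le_mul_of_nonneg_right (hμ ↑i) (sq_nonneg _)) h1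
    have h3 : (v i) ^ 2 ≤ 1/μmin := by
      rw [le_div_iff₀ hμmin]; linarith [mul_comm μmin ((v i)^2)]
    calc ‖v i‖ = Real.sqrt ((v i) ^ 2) := by
          rw [Real.sqrt_sq_eq_abs, Real.norm_eq_abs]
      _ ≤ Real.sqrt (1/μmin) := Real.sqrt_le_sqrt h3
  obtain ⟨v₀, hv₀K, hmax⟩ :=
    hKcompact.exists_isMaxOn hKne (PS_extE_continuous hp).continuousOn
  set u₀ := extE hO v₀ with hu₀def
  have hu₀H : g.memH Ω u₀ := extE_memH v₀
  have hQ1 : QS g Ω hS hO u₀ = 1 := hv₀K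
  have hu₀ne : u₀ ≠ 0 := by
    intro h
    rw [show (0 : V → ℝ) = (fun _ => (0:ℝ)) from rfl] at h
    rw [h, QS_zero] at hQ1
    exact one_ne_zero hQ1.symm
  set M := PS g Ω hO p u₀ with hMdef
  have hM : 0 < M := PS_pos hp u₀ hu₀H hu₀ne
  -- the key global inequality
  have hstar : ∀ u : V → ℝ, g.memH Ω u →
      PS g Ω hO p u ≤ M * (QS g Ω hS hO u) ^ (p/2) := by
    intro u hu
    by_cases hune : u = 0
    · rw [hune]
      rw [show (0 : V → ℝ) = (fun _ => (0:ℝ)) from rfl, QS_zero]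
      have hP0 : PS g Ω hO p (fun _ => (0:ℝ)) = 0 := by
        unfold PS
        refine Finset.sum_eq_zero fun x _ => ?_
        rw [abs_zero, Real.zero_rpow hp0.ne', mul_zero]
      rw [hP0, Real.zero_rpow (by positivity : p/2 ≠ 0), mul_zero]
    · have ha : 0 < QS g Ω hS hO u := QS_pos u hu hune
      set a := QS g Ω hS hO u with hadef
      set c : ℝ := a ^ (-(1/2) : ℝ) with hcdef
      have hc : 0 < c := Real.rpow_pos_of_pos ha _
      have hcH : g.memH Ω (fun z => c * u z) := memH_smul hu c
      have hrvK : (fun i : ↥hO.toFinset => c * u ↑i) ∈ K := by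
        show QS g Ω hS hO (extE hO (fun i => c * u ↑i)) = 1
        rw [extE_of_memH hcH]
        exact hnorm u hu hune
      have hPw : PS g Ω hO p (fun z => c * u z) ≤ M := by
        have := isMaxOn_iff.mp hmax _ hrvK
        rwa [extE_of_memH hcH] at this
      rw [PS_smul hp hc] at hPw
      have hcp : c ^ p = a ^ (-(p/2)) := by
        rw [hcdef, ← Real.rpow_mul ha.le]
        congr 1; ring
      rw [hcp] at hPw
      have hmult := mul_le_mul_of_nonneg_left hPw (Real.rpow_nonneg ha.le (p/2))
      have hcancel : a ^ (p/2) * (a ^ (-(p/2)) * PS g Ω hO p u) = PS g Ω hO p u := by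
        rw [← mul_assoc, ← Real.rpow_add ha]
        norm_num
      rw [hcancel] at hmult
      linarith [mul_comm (a ^ (p/2)) M]
  -- Euler–Lagrange identity at the maximiser
  have hkey : ∀ φ : V → ℝ, g.memH Ω φ →
      NS g Ω hO p u₀ φ = M * BS g Ω hS hO u₀ φ := by
    intro φ hφ
    set B := BS g Ω hS hO u₀ φ with hBdef
    set N := NS g Ω hO p u₀ φ with hNdef
    set Cq := QS g Ω hS hO φ with hCqdef
    -- derivative of the P-part
    have hPd : HasDerivAt (fun s : ℝ => PS g Ω hO p (fun z => u₀ z + s * φ z)) (p * N) 0 := by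
      have hterm : ∀ x ∈ hO.toFinset,
          HasDerivAt (fun s : ℝ => g.μ x * |u₀ x + s * φ x| ^ p)
            (g.μ x * (p * |u₀ x| ^ (p - 2) * u₀ x * φ x)) 0 := by
        intro x _
        have hline : HasDerivAt (fun s : ℝ => u₀ x + s * φ x) (φ x) 0 := by
          simpa using ((hasDerivAt_id (0:ℝ)).mul_const (φ x)).const_add (u₀ x)
        have h2 : HasDerivAt (fun t : ℝ => |t| ^ p)
            (p * |u₀ x| ^ (p - 2) * u₀ x) (u₀ x + 0 * φ x) := by
          simpa using hasDerivAt_abs_rpow hp (u₀ x)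
        have h3 := (h2.comp 0 hline).const_mul (g.μ x)
        exact h3
      have hsum := HasDerivAt.fun_sum hterm
      have hval : ∑ x ∈ hO.toFinset, g.μ x * (p * |u₀ x| ^ (p - 2) * u₀ x * φ x) = p * N := by
        rw [hNdef]
        unfold NS
        rw [Finset.mul_sum]
        exact Finset.sum_congr rfl fun x _ => by ring
      rw [hval] at hsum
      exact hsum
    -- derivative of the Q-part (as a polynomial)
    have hQpoly : ∀ s : ℝ, QS g Ω hS hO (fun z => u₀ z + s * φ z)
        = 1 + 2 * s * B + s ^ 2 * Cq := by
      intro s; rw [QS_line, hQ1]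
    have hpd : HasDerivAt (fun s : ℝ => 1 + 2 * s * B + s ^ 2 * Cq) (2 * B) 0 := by
      have h1 : HasDerivAt (fun s : ℝ => 2 * s * B) (2 * B) 0 := by
        simpa using ((hasDerivAt_id (0:ℝ)).const_mul 2).mul_const B
      have h2 : HasDerivAt (fun s : ℝ => s ^ 2 * Cq) 0 0 := by
        simpa using (hasDerivAt_pow 2 (0:ℝ)).mul_const Cq
      simpa using (h1.const_add (1:ℝ)).fun_add h2
    have hrp : HasDerivAt (fun s : ℝ => (1 + 2 * s * B + s ^ 2 * Cq) ^ (p/2)) (p * B) 0 := by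
      have h := hpd.rpow_const (p := p/2) (Or.inl (by norm_num))
      have hv : (1 + 2 * (0:ℝ) * B + (0:ℝ) ^ 2 * Cq) = 1 := by norm_num
      rw [hv] at h
      rw [Real.one_rpow] at h
      convert h using 1
      ring
    -- the function with a maximum at 0
    set f : ℝ → ℝ := fun s => PS g Ω hO p (fun z => u₀ z + s * φ z)
        - M * (1 + 2 * s * B + s ^ 2 * Cq) ^ (p/2) with hfdef
    have hf0 : f 0 = 0 := by
      have he : (fun z => u₀ z + (0:ℝ) * φ z) = u₀ := funext fun z => by ring
      show PS g Ω hO p (fun z => u₀ z + (0:ℝ) * φ z)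
          - M * (1 + 2 * (0:ℝ) * B + (0:ℝ) ^ 2 * Cq) ^ (p/2) = 0
      rw [he]
      norm_num [Real.one_rpow, ← hMdef]
    have hle : ∀ s, f s ≤ f 0 := by
      intro s
      rw [hf0]
      have h1 := hstar _ (memH_line hu₀H hφ s)
      have h2 : QS g Ω hS hO (fun z => u₀ z + s * φ z) = 1 + 2 * s * B + s ^ 2 * Cq :=
        hQpoly s
      rw [h2] at h1
      show PS g Ω hO p (fun z => u₀ z + s * φ z)
          - M * (1 + 2 * s * B + s ^ 2 * Cq) ^ (p/2) ≤ 0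
      linarith
    have hmaxf : IsLocalMax f 0 := Filter.Eventually.of_forall hle
    have hfd : HasDerivAt f (p * N - M * (p * B)) 0 := hPd.sub (hrp.const_mul M)
    have h0 := hmaxf.hasDerivAt_eq_zero hfd
    have : p * N = p * (M * B) := by linarith
    exact mul_left_cancel₀ hp0.ne' this
  -- the scaling factor
  set t : ℝ := M ^ (-(1/(p-2)) : ℝ) with htdef
  have ht : 0 < t := Real.rpow_pos_of_pos hM _
  have htp : t ^ (p-2) * M = 1 := by
    rw [htdef, ← Real.rpow_mul hM.le]
    have he : (-(1/(p-2))) * (p-2) = -1 := by field_simp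
    rw [he, Real.rpow_neg_one, inv_mul_cancel₀ hM.ne']
  have ht2 : t ^ (2:ℝ) = t ^ 2 := by
    rw [show (2:ℝ) = ((2:ℕ):ℝ) by norm_num, Real.rpow_natCast]
  have htpow : t ^ p = t ^ 2 * t ^ (p-2) := by
    have he : (2:ℝ) + (p-2) = p := by ring
    calc t ^ p = t ^ ((2:ℝ) + (p-2)) := by rw [he]
      _ = t ^ (2:ℝ) * t ^ (p-2) := Real.rpow_add ht _ _
      _ = t ^ 2 * t ^ (p-2) := by rw [ht2]
  -- the candidate ground state
  have hQstar : QS g Ω hS hO (fun z => t * u₀ z) = t ^ 2 := by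
    rw [QS_smul, hQ1, mul_one]
  have hPstar : PS g Ω hO p (fun z => t * u₀ z) = t ^ 2 := by
    rw [PS_smul hp ht, ← hMdef, htpow, mul_assoc, htp, mul_one]
  have hstarH : g.memH Ω (fun z => t * u₀ z) := memH_smul hu₀H t
  have hstarne : (fun z => t * u₀ z) ≠ 0 := by
    intro h
    apply hu₀ne
    funext z
    have := congrFun h z
    simp only [Pi.zero_apply] at this
    exact (mul_eq_zero.mp this).resolve_left ht.ne'
  refine ⟨fun z => t * u₀ z, ⟨hstarne, hstarH, ?_⟩, ?_, ?_⟩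
  · rw [hnormSq_eq (hS := hS) (hO := hO), lpIntO_eq (hO := hO), hQstar, hPstar]
  · -- minimality over the Nehari set
    rintro v ⟨hvne, hvH, hveq⟩
    have hQP : QS g Ω hS hO v = PS g Ω hO p v := by
      rw [← hnormSq_eq (hS := hS) (hO := hO), ← lpIntO_eq (hO := hO)]
      exact hveq
    have hapos : 0 < QS g Ω hS hO v := QS_pos v hvH hvne
    set a := QS g Ω hS hO v with hadef
    have h1 : a ≤ M * a ^ (p/2) := by
      have := hstar v hvH
      rw [← hQP] at this
      exact this
    have hsplit : a ^ (p/2) = a * a ^ ((p-2)/2) := by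
      have he : (1:ℝ) + (p-2)/2 = p/2 := by ring
      calc a ^ (p/2) = a ^ ((1:ℝ) + (p-2)/2) := by rw [he]
        _ = a ^ (1:ℝ) * a ^ ((p-2)/2) := Real.rpow_add hapos _ _
        _ = a * a ^ ((p-2)/2) := by rw [Real.rpow_one]
    have h2 : 1 ≤ M * a ^ ((p-2)/2) := by
      have h3 : a ≤ (M * a ^ ((p-2)/2)) * a := by
        calc a ≤ M * a ^ (p/2) := h1
          _ = (M * a ^ ((p-2)/2)) * a := by rw [hsplit]; ring
      exact (le_mul_iff_one_le_left hapos).mp h3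
    have h4 : M⁻¹ ≤ a ^ ((p-2)/2) := by
      rw [inv_eq_one_div, div_le_iff₀ hM]
      linarith [mul_comm M (a ^ ((p-2)/2))]
    have h5 : (M⁻¹) ^ (2/(p-2)) ≤ (a ^ ((p-2)/2)) ^ (2/(p-2)) :=
      Real.rpow_le_rpow (inv_nonneg.mpr hM.le) h4
        (le_of_lt (div_pos two_pos (by linarith)))
    have h6 : (a ^ ((p-2)/2)) ^ (2/(p-2)) = a := by
      rw [← Real.rpow_mul hapos.le]
      have he : (p-2)/2 * (2/(p-2)) = 1 := by field_simp
      rw [he, Real.rpow_one]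
    have h7 : (M⁻¹) ^ (2/(p-2)) = t ^ 2 := by
      rw [← Real.rpow_neg_one M, ← Real.rpow_mul hM.le, ← ht2, htdef,
        ← Real.rpow_mul hM.le]
      congr 1
      field_simp
    have h8 : t ^ 2 ≤ a := by
      rw [← h7]
      calc (M⁻¹) ^ (2/(p-2)) ≤ (a ^ ((p-2)/2)) ^ (2/(p-2)) := h5
        _ = a := h6
    rw [JOmega_eq (hS := hS) (hO := hO), JOmega_eq (hS := hS) (hO := hO)]
    rw [hQstar, hPstar, ← hadef, ← hQP]
    have hcoef : (0:ℝ) ≤ 1/2 - 1/p := by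
      rw [sub_nonneg, div_le_div_iff₀ hp0 (by norm_num : (0:ℝ) < 2)]
      linarith
    nlinarith [mul_le_mul_of_nonneg_left h8 hcoef]
  · -- criticality
    intro φ hφ
    rw [JderivO_eq (hS := hS) (hO := hO), BS_smul, NS_smul hp ht, hkey φ hφ]
    have htp1 : t ^ (p-1) = t ^ (p-2) * t := by
      have he : (p-2) + 1 = p - 1 := by ring
      calc t ^ (p-1) = t ^ ((p-2) + 1) := by rw [he]
        _ = t ^ (p-2) * t ^ (1:ℝ) := Real.rpow_add ht _ _
        _ = t ^ (p-2) * t := by rw [Real.rpow_one]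
    rw [htp1]
    linear_combination (-(t * BS g Ω hS hO u₀ φ)) * htp
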